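/- Let F be a nonzero cubic form on a 2-dimensional ℚ-vector space whose components in some basis satisfy F₁₁₁F₂₂₂ = F₁₁₂F₁₂₂, F₁₁₂² = F₁₁₁F₁₂₂ and F₁₂₂² = F₁₁₂F₂₂₂. Then there is a basis in which F₁₁₁ = F₁₁₂ = F₁₂₂ = 0 and F₂₂₂ ≠ 0, i.e. F is equivalent to the cubic form y³ up to scaling. -/

import Mathlib

/-- A nonzero cubic form on a 2-dimensional ℚ-vector space whose components satisfy
`F₁₁₁F₂₂₂ = F₁₁₂F₁₂₂`, `F₁₁₂² = F₁₁₁F₁₂₂` and `F₁₂₂² = F₁₁₂F₂₂₂` in some basis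
is equivalent (up to basis change) to `y³` up to scaling. -/
theorem stmt_9 (V : Type*) [AddCommGroup V] [Module ℚ V]
    (hV : Module.finrank ℚ V = 2)
    (F : V →ₗ[ℚ] V →ₗ[ℚ] V →ₗ[ℚ] ℚ)
    (hsymm₁ : ∀ x y z : V, F x y z = F y x z)
    (hsymm₂ : ∀ x y z : V, F x y z = F x z y)
    (hF : ∃ x y z : V, F x y z ≠ 0)
    (e : Module.Basis (Fin 2) ℚ V)
    (h1 : F (e 0) (e 0) (e 0) * F (e 1) (e 1) (e 1)
        = F (e 0) (e 0) (e 1) * F (e 0) (e 1) (e 1))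
    (h2 : F (e 0) (e 0) (e 1) ^ 2 = F (e 0) (e 0) (e 0) * F (e 0) (e 1) (e 1))
    (h3 : F (e 0) (e 1) (e 1) ^ 2 = F (e 0) (e 0) (e 1) * F (e 1) (e 1) (e 1)) :
    ∃ e' : Module.Basis (Fin 2) ℚ V,
      F (e' 0) (e' 0) (e' 0) = 0 ∧
      F (e' 0) (e' 0) (e' 1) = 0 ∧
      F (e' 0) (e' 1) (e' 1) = 0 ∧
      F (e' 1) (e' 1) (e' 1) ≠ 0 := by
  set a := F (e 0) (e 0) (e 0) with ha_def
  set b := F (e 0) (e 0) (e 1) with hb_def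
  set c := F (e 0) (e 1) (e 1) with hc_def
  set d := F (e 1) (e 1) (e 1) with hd_def
  have hb1 : F (e 0) (e 1) (e 0) = b := by rw [hsymm₂]
  have hb2 : F (e 1) (e 0) (e 0) = b := by rw [hsymm₁, hsymm₂]
  have hc1 : F (e 1) (e 0) (e 1) = c := by rw [hsymm₁]
  have hc2 : F (e 1) (e 1) (e 0) = c := by rw [hsymm₂, hsymm₁]
  by_cases ha : a = 0
  · have hb : b = 0 := by
      have hb2' : b ^ 2 = 0 := by rw [h2, ha, zero_mul]
      exact pow_eq_zero_iff two_ne_zero |>.mp hb2'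
    have hc : c = 0 := by
      have hc2' : c ^ 2 = 0 := by rw [h3, hb, zero_mul]
      exact pow_eq_zero_iff two_ne_zero |>.mp hc2'
    have hd : d ≠ 0 := by
      intro hd
      obtain ⟨x, y, z, hxyz⟩ := hF
      apply hxyz
      have hF0 : F = 0 := by
        apply e.ext; intro i
        apply e.ext; intro j
        apply e.ext; intro k
        simp only [LinearMap.zero_apply]
        fin_cases i <;> fin_cases j <;> fin_cases k
        exacts [ha, hb, hb1.trans hb, hc, hb2.trans hb, hc1.trans hc,
          hc2.trans hc, hd]
      rw [hF0]; simp
    exact ⟨e, ha, hb, hc, hd⟩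
  · set A : Matrix (Fin 2) (Fin 2) ℚ := !![b, 1; -a, 0] with hA_def
    have hdet : A.det = a := by simp [hA_def, Matrix.det_fin_two]
    have hA : IsUnit A.det := by rw [hdet]; exact isUnit_iff_ne_zero.mpr ha
    set e' := e.map (Matrix.toLinearEquiv e A hA) with he'_def
    have he0 : e' 0 = b • e 0 + (-a) • e 1 := by
      rw [he'_def, Module.Basis.map_apply, Matrix.toLinearEquiv_apply, Matrix.toLin_self]
      simp [hA_def, Fin.sum_univ_two]
    have he1 : e' 1 = e 0 := by
      rw [he'_def, Module.Basis.map_apply, Matrix.toLinearEquiv_apply, Matrix.toLin_self]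
      simp [hA_def, Fin.sum_univ_two]
    refine ⟨e', ?_, ?_, ?_, ?_⟩ <;> simp only [he0, he1] <;>
      simp only [map_add, map_smul, map_neg, LinearMap.add_apply, LinearMap.smul_apply,
        LinearMap.neg_apply, smul_eq_mul, hb1, hb2, hc1, hc2, ← ha_def, ← hb_def,
        ← hc_def, ← hd_def]
    · linear_combination (-2*a*b)*h2 - a^2*h1
    · linear_combination (-a)*h2
    · ring
    · exact ha
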